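/- Let a < b be real numbers and let X_1, ..., X_n be i.i.d. random variables taking values in [a,b] with common mean μ satisfying l ≤ μ ≤ u, where a ≤ l ≤ u ≤ b. Suppose l ≥ (a+b)/2. Then for every ε ∈ [0, u−l], the empirical mean μ̂_n = (1/n)∑_{i=1}^n X_i satisfies P(μ̂_n − μ ≥ ε) ≤ exp(−n ε² / (2 (l−a)(b−l))). -/

import Mathlib

open MeasureTheory ProbabilityTheory Real

private lemma nonneg_of_hasDerivAt {F F' : ℝ → ℝ}
    (hF : ∀ x, HasDerivAt F (F' x) x) (h0 : F 0 = 0)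
    (h' : ∀ x, 0 ≤ x → 0 ≤ F' x) {t : ℝ} (ht : 0 ≤ t) : 0 ≤ F t := by
  have hmono : MonotoneOn F (Set.Ici 0) := by
    refine monotoneOn_of_deriv_nonneg (convex_Ici 0) ?_ ?_ ?_
    · exact fun x _ => (hF x).continuousAt.continuousWithinAt
    · exact fun x _ => (hF x).differentiableAt.differentiableWithinAt
    · intro x hx
      rw [interior_Ici] at hx
      rw [(hF x).deriv]
      exact h' x hx.le
  calc (0:ℝ) = F 0 := h0.symm
  _ ≤ F t := hmono Set.self_mem_Ici ht ht

private lemma two_point_mgf_le {p t : ℝ} (hp : 1/2 ≤ p) (hp1 : p ≤ 1) (ht : 0 ≤ t) :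
    (1 - p) * Real.exp (-(p * t)) + p * Real.exp ((1 - p) * t)
      ≤ Real.exp (p * (1 - p) * t ^ 2 / 2) := by
  have hp0 : 0 < p := lt_of_lt_of_le (by norm_num) hp
  set c : ℝ := p * (1 - p) with hc
  have hc0 : 0 ≤ c := mul_nonneg hp0.le (by linarith)
  set D : ℝ → ℝ := fun x => 1 - p + p * Real.exp x with hD
  have hDpos : ∀ x, 0 < D x := fun x => by
    have := Real.exp_pos x
    have : 0 < p * Real.exp x := by positivity
    simp only [hD]; nlinarith
  -- derivative computations
  have hDdiff : ∀ x, HasDerivAt D (p * Real.exp x) x := fun x => by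
    exact ((Real.hasDerivAt_exp x).const_mul p).const_add (1 - p)
  set F : ℝ → ℝ := fun x => c * x ^ 2 / 2 + p * x - Real.log (D x) with hF
  set G : ℝ → ℝ := fun x => c * x + p - p * Real.exp x / D x with hG
  set H : ℝ → ℝ := fun x => c - p * Real.exp x * (1 - p) / (D x) ^ 2 with hH
  have hFd : ∀ x, HasDerivAt F (G x) x := by
    intro x
    have h1 : HasDerivAt (fun x : ℝ => c * x ^ 2 / 2 + p * x) (c * x + p) x := by
      have := (((hasDerivAt_pow 2 x).const_mul c).div_const 2).add
        ((hasDerivAt_id x).const_mul p)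
      exact this.congr_deriv (by simp only [Nat.cast_ofNat, Nat.reduceSub, pow_one]; ring)
    have h2 : HasDerivAt (fun x => Real.log (D x)) (p * Real.exp x / D x) x :=
      (hDdiff x).log (hDpos x).ne'
    exact h1.sub h2
  have hGd : ∀ x, HasDerivAt G (H x) x := by
    intro x
    have h1 : HasDerivAt (fun x : ℝ => c * x + p) c x := by
      simpa using ((hasDerivAt_id x).const_mul c).add_const p
    have h2 : HasDerivAt (fun x => p * Real.exp x / D x)
        ((p * Real.exp x * D x - p * Real.exp x * (p * Real.exp x)) / (D x) ^ 2) x :=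
      ((Real.hasDerivAt_exp x).const_mul p).div (hDdiff x) (hDpos x).ne'
    have := h1.sub h2
    refine this.congr_deriv ?_
    have hDx := (hDpos x).ne'
    show _ = c - p * Real.exp x * (1 - p) / (D x) ^ 2
    rw [hD] at hDx ⊢
    field_simp
    ring
  have hHnn : ∀ x, 0 ≤ x → 0 ≤ H x := by
    intro x hx
    have hs : (1:ℝ) ≤ Real.exp x := Real.one_le_exp hx
    have key : Real.exp x ≤ (D x) ^ 2 := by
      have hmul : 0 ≤ (p - 1/2) * (Real.exp x - 1) :=
        mul_nonneg (by linarith) (by linarith)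
      have h3 : (Real.exp x + 1)/2 ≤ D x := by simp only [hD]; nlinarith
      have h4 : Real.exp x ≤ ((Real.exp x + 1)/2) ^ 2 := by nlinarith [sq_nonneg (Real.exp x - 1)]
      have h5 : ((Real.exp x + 1)/2) ^ 2 ≤ (D x) ^ 2 := by
        apply pow_le_pow_left₀ (by positivity) h3
      exact le_trans h4 h5
    have : p * Real.exp x * (1 - p) ≤ c * (D x) ^ 2 := by
      rw [hc]
      nlinarith [hDpos x, Real.exp_pos x]
    have hD2 : (0:ℝ) < (D x) ^ 2 := pow_pos (hDpos x) 2
    simp only [hH]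
    rw [sub_nonneg, div_le_iff₀ hD2]
    linarith
  have hG0 : G 0 = 0 := by
    simp only [hG, hD]
    simp
  have hGnn : ∀ x, 0 ≤ x → 0 ≤ G x := fun x hx => nonneg_of_hasDerivAt hGd hG0 hHnn hx
  have hF0 : F 0 = 0 := by
    simp only [hF, hD]
    simp
  have hFnn : 0 ≤ F t := nonneg_of_hasDerivAt hFd hF0 hGnn ht
  -- conclude
  have hlog : Real.log (D t) ≤ c * t ^ 2 / 2 + p * t := by
    simp only [hF] at hFnn; linarith
  have hDle : D t ≤ Real.exp (c * t ^ 2 / 2 + p * t) :=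
    (Real.log_le_iff_le_exp (hDpos t)).1 hlog
  have hLHS : (1 - p) * Real.exp (-(p * t)) + p * Real.exp ((1 - p) * t)
      = Real.exp (-(p * t)) * D t := by
    simp only [hD]
    rw [mul_add, show (1 - p) * t = t + -(p*t) by ring, Real.exp_add]
    ring
  rw [hLHS]
  calc Real.exp (-(p * t)) * D t ≤ Real.exp (-(p * t)) * Real.exp (c * t ^ 2 / 2 + p * t) := by
        gcongr
  _ = Real.exp (c * t ^ 2 / 2) := by rw [← Real.exp_add]; ring_nf

private lemma integrable_of_bdd {Ω : Type*} [MeasurableSpace Ω] {P : Measure Ω}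
    [IsProbabilityMeasure P] {X : Ω → ℝ} {a b : ℝ}
    (hmeas : Measurable X) (hbdd : ∀ᵐ ω ∂P, X ω ∈ Set.Icc a b) :
    Integrable X P := by
  refine Integrable.mono' (integrable_const (max |a| |b|)) hmeas.aestronglyMeasurable ?_
  filter_upwards [hbdd] with ω hω
  exact abs_le_max_abs_abs hω.1 hω.2

private lemma integrable_exp_of_bdd {Ω : Type*} [MeasurableSpace Ω] {P : Measure Ω}
    [IsProbabilityMeasure P] {X : Ω → ℝ} {a b t : ℝ}
    (hmeas : Measurable X) (hbdd : ∀ᵐ ω ∂P, X ω ∈ Set.Icc a b) :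
    Integrable (fun ω => Real.exp (t * X ω)) P := by
  refine Integrable.mono' (integrable_const (Real.exp (|t| * max |a| |b|)))
    ((hmeas.const_mul t).exp.aestronglyMeasurable) ?_
  filter_upwards [hbdd] with ω hω
  rw [Real.norm_eq_abs, Real.abs_exp]
  apply Real.exp_le_exp.mpr
  calc t * X ω ≤ |t * X ω| := le_abs_self _
  _ = |t| * |X ω| := abs_mul _ _
  _ ≤ |t| * max |a| |b| := by
      apply mul_le_mul_of_nonneg_left (abs_le_max_abs_abs hω.1 hω.2) (abs_nonneg t)

private lemma mgf_le_of_mem_Icc {Ω : Type*} [MeasurableSpace Ω] {P : Measure Ω}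
    [IsProbabilityMeasure P] {X : Ω → ℝ} {a b μ : ℝ} (hab : a < b)
    (hmeas : Measurable X) (hbdd : ∀ᵐ ω ∂P, X ω ∈ Set.Icc a b)
    (hmean : ∫ ω, X ω ∂P = μ) (hμab : (a + b) / 2 ≤ μ) (hμb : μ ≤ b)
    {t : ℝ} (ht : 0 ≤ t) :
    mgf X P t ≤ Real.exp (t * μ + (μ - a) * (b - μ) * t ^ 2 / 2) := by
  have hba : (0:ℝ) < b - a := by linarith
  set p : ℝ := (μ - a) / (b - a) with hpdef
  have hp : 1/2 ≤ p := by rw [hpdef, le_div_iff₀ hba]; linarith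
  have hp1 : p ≤ 1 := by rw [hpdef, div_le_one hba]; linarith
  set c1 : ℝ := (Real.exp (t * b) - Real.exp (t * a)) / (b - a) with hc1
  set c0 : ℝ := (b * Real.exp (t * a) - a * Real.exp (t * b)) / (b - a) with hc0
  have hintX : Integrable X P := integrable_of_bdd hmeas hbdd
  -- step 1 : mgf ≤ (1-p) exp(t a) + p exp(t b)
  have step1 : mgf X P t ≤ (1 - p) * Real.exp (t * a) + p * Real.exp (t * b) := by
    have hpt : ∀ᵐ ω ∂P, Real.exp (t * X ω) ≤ c0 + c1 * X ω := by
      filter_upwards [hbdd] with ω hω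
      have hx1 := hω.1; have hx2 := hω.2
      set x := X ω
      have hθ : 0 ≤ (b - x) / (b - a) := div_nonneg (by linarith) hba.le
      have hθ' : 0 ≤ (x - a) / (b - a) := div_nonneg (by linarith) hba.le
      have hsum : (b - x) / (b - a) + (x - a) / (b - a) = 1 := by
        rw [← add_div, div_eq_one_iff_eq hba.ne']; ring
      have hconv := convexOn_exp.2 (Set.mem_univ (t * a)) (Set.mem_univ (t * b)) hθ hθ' hsum
      simp only [smul_eq_mul] at hconv
      have harg : (b - x) / (b - a) * (t * a) + (x - a) / (b - a) * (t * b) = t * x := by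
        field_simp
        ring
      rw [harg] at hconv
      calc Real.exp (t * x) ≤ (b - x) / (b - a) * Real.exp (t * a)
            + (x - a) / (b - a) * Real.exp (t * b) := hconv
      _ = c0 + c1 * x := by rw [hc0, hc1]; field_simp; ring
    have hintR : Integrable (fun ω => c0 + c1 * X ω) P :=
      (integrable_const c0).add (hintX.const_mul c1)
    have := integral_mono_ae (integrable_exp_of_bdd hmeas hbdd) hintR hpt
    rw [mgf]
    refine le_trans this ?_
    rw [integral_add (integrable_const c0) (hintX.const_mul c1), integral_const,
      integral_const_mul, hmean]
    simp only [probReal_univ, measure_univ, ENNReal.toReal_one, smul_eq_mul, one_mul]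
    rw [hc0, hc1, hpdef]
    apply le_of_eq
    field_simp
    ring
  -- step 2 : two-point bound
  have hs : 0 ≤ t * (b - a) := mul_nonneg ht hba.le
  have step2 := two_point_mgf_le hp hp1 hs
  have hta : t * a = t * μ + -(p * (t * (b - a))) := by
    rw [hpdef]; field_simp; ring
  have htb : t * b = t * μ + (1 - p) * (t * (b - a)) := by
    rw [hpdef]; field_simp; ring
  have heq : (1 - p) * Real.exp (t * a) + p * Real.exp (t * b)
      = Real.exp (t * μ) * ((1 - p) * Real.exp (-(p * (t * (b - a))))
        + p * Real.exp ((1 - p) * (t * (b - a)))) := by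
    rw [hta, htb, Real.exp_add, Real.exp_add]; ring
  have hexp : p * (1 - p) * (t * (b - a)) ^ 2 / 2 = (μ - a) * (b - μ) * t ^ 2 / 2 := by
    rw [hpdef]; field_simp; ring
  calc mgf X P t ≤ (1 - p) * Real.exp (t * a) + p * Real.exp (t * b) := step1
  _ = Real.exp (t * μ) * ((1 - p) * Real.exp (-(p * (t * (b - a))))
        + p * Real.exp ((1 - p) * (t * (b - a)))) := heq
  _ ≤ Real.exp (t * μ) * Real.exp (p * (1 - p) * (t * (b - a)) ^ 2 / 2) := by
      exact mul_le_mul_of_nonneg_left step2 (Real.exp_pos _).le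
  _ = Real.exp (t * μ + (μ - a) * (b - μ) * t ^ 2 / 2) := by
      rw [← Real.exp_add, hexp]

/-- Improved Chernoff-Hoeffding upper-tail bound when `l ≥ (a+b)/2`. -/
theorem upper_tail_bound_high_lower_bound
    {Ω : Type*} [MeasurableSpace Ω] (P : Measure Ω) [IsProbabilityMeasure P]
    (a b l u μ : ℝ) (hab : a < b) (hal : a ≤ l) (hlu : l ≤ u) (hub : u ≤ b)
    (hl : (a + b) / 2 ≤ l)
    (n : ℕ) (hn : 0 < n) (X : Fin n → Ω → ℝ)
    (hmeas : ∀ i, Measurable (X i))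
    (hindep : ProbabilityTheory.iIndepFun X P)
    (hident : ∀ i j, ProbabilityTheory.IdentDistrib (X i) (X j) P P)
    (hbdd : ∀ i, ∀ᵐ ω ∂P, X i ω ∈ Set.Icc a b)
    (hmean : ∀ i, ∫ ω, X i ω ∂P = μ)
    (hlμ : l ≤ μ) (hμu : μ ≤ u)
    (ε : ℝ) (hε : ε ∈ Set.Icc 0 (u - l)) :
    (P {ω | (∑ i, X i ω) / n - μ ≥ ε}).toReal ≤
      Real.exp (-((n : ℝ) * ε ^ 2) / (2 * (l - a) * (b - l))) := by
  obtain ⟨hε0, hεul⟩ := hε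
  rcases eq_or_lt_of_le hε0 with h0 | hεpos
  · -- ε = 0 : the bound is trivial since the RHS is 1
    have hR : Real.exp (-((n : ℝ) * ε ^ 2) / (2 * (l - a) * (b - l))) = 1 := by
      rw [← h0]; norm_num
    rw [hR]
    calc (P {ω | (∑ i, X i ω) / n - μ ≥ ε}).toReal
        ≤ (P Set.univ).toReal :=
          ENNReal.toReal_mono (measure_ne_top _ _) (measure_mono (Set.subset_univ _))
    _ = 1 := by simp
  · -- ε > 0
    have hn0 : (0:ℝ) < n := by exact_mod_cast hn
    have hla : a < l := by linarith
    have hlb : l < b := by linarith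
    have hμb : μ ≤ b := le_trans hμu hub
    set V : ℝ := (l - a) * (b - l) with hV
    have hVpos : 0 < V := mul_pos (by linarith) (by linarith)
    set v : ℝ := (μ - a) * (b - μ) with hv
    have hvV : v ≤ V := by
      have hh : 0 ≤ (μ - l) * (μ + l - (a + b)) :=
        mul_nonneg (sub_nonneg.2 hlμ) (by linarith)
      rw [hv, hV]; nlinarith [hh]
    set lam : ℝ := ε / V with hlam
    have hlam0 : 0 ≤ lam := (div_pos hεpos hVpos).le
    have hint : ∀ i, Integrable (fun ω => Real.exp (lam * X i ω)) P := fun i =>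
      integrable_exp_of_bdd (hmeas i) (hbdd i)
    have hVne : V ≠ 0 := hVpos.ne'
    have hmgf : ∀ i, mgf (X i) P lam ≤ Real.exp (lam * μ + v * lam ^ 2 / 2) := by
      intro i
      rw [hv]
      exact mgf_le_of_mem_Icc hab (hmeas i) (hbdd i) (hmean i)
        (le_trans hl hlμ) hμb hlam0
    have hset : {ω | (∑ i, X i ω) / n - μ ≥ ε} = {ω | (μ + ε) * n ≤ (∑ i, X i) ω} := by
      ext ω
      simp only [Set.mem_setOf_eq, Finset.sum_apply, ge_iff_le]
      rw [le_sub_iff_add_le, ← le_div_iff₀ hn0, add_comm ε μ]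
    rw [hset]
    have hchern := measure_ge_le_exp_mul_mgf (μ := P) (X := ∑ i, X i) (t := lam)
      ((μ + ε) * n) hlam0 (hindep.integrable_exp_mul_sum hmeas (fun i _ => hint i))
    refine le_trans hchern ?_
    rw [hindep.mgf_sum hmeas]
    have hprod : ∏ i, mgf (X i) P lam ≤ (Real.exp (lam * μ + v * lam ^ 2 / 2)) ^ n := by
      calc ∏ i, mgf (X i) P lam
          ≤ ∏ _i : Fin n, Real.exp (lam * μ + v * lam ^ 2 / 2) :=
            Finset.prod_le_prod (fun i _ => mgf_nonneg) (fun i _ => hmgf i)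
      _ = (Real.exp (lam * μ + v * lam ^ 2 / 2)) ^ n := by
            rw [Finset.prod_const, Finset.card_univ, Fintype.card_fin]
    calc Real.exp (-lam * ((μ + ε) * n)) * ∏ i, mgf (X i) P lam
        ≤ Real.exp (-lam * ((μ + ε) * n)) * (Real.exp (lam * μ + v * lam ^ 2 / 2)) ^ n :=
          mul_le_mul_of_nonneg_left hprod (Real.exp_pos _).le
    _ = Real.exp (-lam * ((μ + ε) * n) + n * (lam * μ + v * lam ^ 2 / 2)) := by
          rw [← Real.exp_nat_mul, ← Real.exp_add]
    _ ≤ Real.exp (-((n : ℝ) * ε ^ 2) / (2 * (l - a) * (b - l))) := by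
          apply Real.exp_le_exp.mpr
          have key : -lam * ((μ + ε) * n) + n * (lam * μ + v * lam ^ 2 / 2)
              = (n:ℝ) * (v * ε ^ 2 / (2 * V ^ 2) - ε ^ 2 / V) := by
            rw [hlam]; field_simp [hVne]
            ring
          have hR : -((n : ℝ) * ε ^ 2) / (2 * (l - a) * (b - l))
              = (n:ℝ) * (-(ε ^ 2) / (2 * V)) := by
            have h1 : l - a ≠ 0 := sub_ne_zero.mpr hla.ne'
            have h2 : b - l ≠ 0 := sub_ne_zero.mpr hlb.ne'
            field_simp
            rw [hV]
          rw [key, hR]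
          apply mul_le_mul_of_nonneg_left ?_ hn0.le
          have e1 : v * ε ^ 2 / (2 * V ^ 2) ≤ V * ε ^ 2 / (2 * V ^ 2) := by
            gcongr
          have e2 : V * ε ^ 2 / (2 * V ^ 2) = ε ^ 2 / (2 * V) := by
            field_simp [hVne]
          have e3 : ε ^ 2 / (2 * V) - ε ^ 2 / V = -(ε ^ 2) / (2 * V) := by
            field_simp [hVne]; ring
          linarith
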